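/- arXiv:2507.20041 — 2 statements merged into one kernel-verified Lean document; each statement's English description precedes it below -/
import Mathlib

section
/- In the double-collect validation scheme: if a reader observes version v₁ (even) before reading data and version v₂ after reading, and v₁ = v₂, then the data read is identical to the data at the moment of the first version read (no write occurred during the read interval). -/
/-- Double-collect validation: the shared object's version is monotonically
non-decreasing over time and its data can change from one instant to the next
only while the version is odd (the 'dirty' phase of a write).  If a reader
observes an even version `v₁ = ver t₁` before reading the data, reads the data
at some time `t ∈ [t₁, t₂]`, and then observes `v₂ = ver t₂` with `v₁ = v₂`,
then the data it read is identical to the data at the moment of the first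
version read (no write occurred during the read interval). -/
theorem double_collect_validation {D : Type*}
    (ver : ℕ → ℕ) (data : ℕ → D)
    (hmono : Monotone ver)
    (hdirty : ∀ t, data (t + 1) ≠ data t → Odd (ver t))
    (t₁ t t₂ : ℕ) (h₁ : t₁ ≤ t) (h₂ : t ≤ t₂)
    (heven : Even (ver t₁)) (heq : ver t₁ = ver t₂) :
    data t = data t₁ := by
  induction t with
  | zero =>
    have : t₁ = 0 := Nat.le_zero.mp h₁
    rw [this]
  | succ n ih =>
    rcases Nat.lt_or_ge t₁ (n + 1) with h | h
    · have hn : t₁ ≤ n := Nat.lt_succ_iff.mp h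
      have ihn := ih hn (Nat.le_of_succ_le h₂)
      have hvn : ver n = ver t₁ :=
        le_antisymm (heq ▸ hmono (Nat.le_of_succ_le h₂)) (hmono hn)
      by_cases hd : data (n + 1) = data n
      · rw [hd, ihn]
      · exact absurd (hvn ▸ hdirty n hd) (Nat.not_odd_iff_even.mpr heven)
    · have : t₁ = n + 1 := le_antisymm h₁ h
      rw [this]
end

section
/- In a doubly-linked list of leaf nodes with strictly increasing key ranges (for each leaf l, all keys in l.right exceed all keys in l), a traversal starting at the unique leaf whose key range contains lowKey and following right-pointers, stopping when a key greater than highKey is seen at a leaf with no further keys in range, visits every leaf whose key range intersects [lowKey, highKey]. -/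
/-- Leaves `l 0, ..., l (n-1)` are linked by right pointers, leaf `i` having
key range `[a i, a (i+1))` with strictly increasing boundaries
`a 0 < a 1 < ... < a n`.  A range query `[low, high]` (with
`a 0 ≤ low ≤ high < a n`) starts at the unique leaf `s` whose key range
contains `low` and advances to the right while the current leaf's key range
intersects `[low, high]`.  Then every leaf whose key range intersects
`[low, high]` is visited: it lies at an index `j ≥ s`, and the key ranges of
all leaves between `s` and `j` also intersect `[low, high]`, so the traversal
reaches it. -/
theorem range_scan_visits_all_intersecting_leaves {K : Type*} [LinearOrder K]
    (n : ℕ) (hn : 0 < n) (a : ℕ → K)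
    (hmono : ∀ i j, i < j → j ≤ n → a i < a j)
    (low high : K) (hlh : low ≤ high) (h0 : a 0 ≤ low) (hhi : high < a n)
    (s : ℕ) (hs : s < n) (hsl : a s ≤ low) (hsr : low < a (s + 1)) :
    ∀ j, j < n → (∃ x, a j ≤ x ∧ x < a (j + 1) ∧ low ≤ x ∧ x ≤ high) →
      s ≤ j ∧ ∀ i, s ≤ i → i ≤ j →
        ∃ x, a i ≤ x ∧ x < a (i + 1) ∧ low ≤ x ∧ x ≤ high := by
  have hmono' : ∀ i j, i ≤ j → j ≤ n → a i ≤ a j := by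
    intro i j hij hjn
    rcases eq_or_lt_of_le hij with rfl | h
    · exact le_rfl
    · exact (hmono i j h hjn).le
  intro j hj ⟨x, hx1, hx2, hx3, hx4⟩
  have hsj : s ≤ j := by
    by_contra h
    push_neg at h
    have : a (j + 1) ≤ a s := hmono' (j + 1) s h hs.le
    exact absurd (lt_of_lt_of_le hx2 (this.trans hsl)) (not_lt.mpr hx3)
  refine ⟨hsj, fun i hi hij => ?_⟩
  have hij1 : i + 1 ≤ n := Nat.succ_le_of_lt (lt_of_le_of_lt hij hj)
  refine ⟨max (a i) low, le_max_left _ _, ?_, le_max_right _ _, ?_⟩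
  · exact max_lt (hmono i (i+1) (Nat.lt_succ_self i) hij1)
      (lt_of_lt_of_le hsr (hmono' (s+1) (i+1) (Nat.succ_le_succ hi) hij1))
  · exact max_le ((hmono' i j hij hj.le).trans (hx1.trans hx4)) hlh
end
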